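/- With the monomial order of Guo–Sit–Zhang on 𝔐(X) and S = { (⌊⌊w⌋⌋, w), (⌊uv⌋, ⌊v⌋⌊u⌋), (⌊1⌋, 1) : w ∈ 𝔐(X), u,v ∈ 𝔐(X)\{1} }, the term-rewriting system Π_S is convergent, and Irr(S) = 𝔐(X) \ Dom(Π_S) is a section of the free ∗-monoid 𝔐(X)/⟨S⟩. -/

import Mathlib

namespace OpMon

/-- Letters of bracketed words: either a variable or a bracketed word. -/
inductive Letter (X : Type) : Type
  | of : X → Letter X
  | br : List (Letter X) → Letter X

/-- The free operated monoid `𝔐(X)`, modeled as lists of letters (free monoid on letters). -/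
abbrev M (X : Type) := List (Letter X)

/-- The operator `⌊ ⌋` on `𝔐(X)`. -/
def L {X : Type} (w : M X) : M X := [Letter.br w]

mutual
  /-- Substitute each variable by a word (letter version). -/
  def bindL {Y Z : Type} : Letter Y → (Y → M Z) → M Z
    | .of y, f => f y
    | .br w, f => [.br (bindW w f)]
  /-- Substitute each variable by a word (word version). -/
  def bindW {Y Z : Type} : M Y → (Y → M Z) → M Z
    | [], _ => []
    | a :: as, f => bindL a f ++ bindW as f
end

mutual
  /-- Count occurrences of variables satisfying `p` (letter version). -/
  def cntL {Y : Type} (p : Y → Bool) : Letter Y → ℕ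
    | .of y => if p y then 1 else 0
    | .br w => cntW p w
  /-- Count occurrences of variables satisfying `p` (word version). -/
  def cntW {Y : Type} (p : Y → Bool) : M Y → ℕ
    | [] => 0
    | a :: as => cntL p a + cntW p as
end

/-- The star letter `⋆`, modeled as `none`. -/
def starW {X : Type} : M (Option X) := [Letter.of none]

/-- `q` is a `⋆`-bracketed word: exactly one occurrence of `⋆`. -/
def IsStar {X : Type} (q : M (Option X)) : Prop :=
  cntW (fun o => o.isNone) q = 1

/-- Substitution `q|_u` of `u` for `⋆`. -/
def sub {X : Type} (q : M (Option X)) (u : M X) : M X :=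
  bindW q (fun o => Option.elim o u (fun x => [Letter.of x]))

/-- Embed `𝔐(X)` into `𝔐(X ∪ {⋆})`. -/
def emb {X : Type} (w : M X) : M (Option X) :=
  bindW w (fun x => [Letter.of (some x)])

/-- Substitute a `⋆`-word `r` for the `⋆` of `q`, yielding a word on `X ∪ {⋆}`. -/
def subS {X : Type} (q r : M (Option X)) : M (Option X) :=
  bindW q (fun o => Option.elim o r (fun x => [Letter.of (some x)]))

/-- `p` is a `(⋆₁,⋆₂)`-bracketed word (⋆₁ = `none`, ⋆₂ = `some none`). -/
def IsStar2 {X : Type} (p : M (Option (Option X))) : Prop :=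
  cntW (fun o => o.isNone) p = 1 ∧
  cntW (fun o => match o with | some none => true | _ => false) p = 1

/-- Substitution `p|_{u₁,u₂}`. -/
def sub2 {X : Type} (p : M (Option (Option X))) (u₁ u₂ : M X) : M X :=
  bindW p (fun o => match o with
    | none => u₁
    | some none => u₂
    | some (some x) => [Letter.of x])

/-- Substitution `p|_{u₁,⋆₂}`, a `⋆`-word. -/
def sub2L {X : Type} (p : M (Option (Option X))) (u₁ : M X) : M (Option X) :=
  bindW p (fun o => match o with
    | none => emb u₁
    | some none => [Letter.of none]
    | some (some x) => [Letter.of (some x)])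

/-- Substitution `p|_{⋆₁,u₂}`, a `⋆`-word. -/
def sub2R {X : Type} (p : M (Option (Option X))) (u₂ : M X) : M (Option X) :=
  bindW p (fun o => match o with
    | none => [Letter.of none]
    | some none => emb u₂
    | some (some x) => [Letter.of (some x)])

/-- `R^c`. -/
def Rc {X : Type} (R : Set (M X × M X)) : Set (M X × M X) :=
  {p | ∃ q a b, IsStar q ∧ (a, b) ∈ R ∧ p = (sub q a, sub q b)}

/-- Inverse relation `R⁻¹`. -/
def relInv {X : Type} (R : Set (M X × M X)) : Set (M X × M X) :=
  {p | (p.2, p.1) ∈ R}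

/-- Closure under right mult. (C1), left mult. (C2), and the operator (C3). -/
def Closed {X : Type} (S : Set (M X × M X)) : Prop :=
  ∀ a b, (a, b) ∈ S → ∀ c : M X,
    (a ++ c, b ++ c) ∈ S ∧ (c ++ a, c ++ b) ∈ S ∧ (L a, L b) ∈ S

/-- Composition of relations. -/
def relComp {X : Type} (R S : Set (M X × M X)) : Set (M X × M X) :=
  {p | ∃ c, (p.1, c) ∈ R ∧ (c, p.2) ∈ S}

/-- `relPow R n = R^(n+1)`. -/
def relPow {X : Type} (R : Set (M X × M X)) : ℕ → Set (M X × M X)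
  | 0 => R
  | n + 1 => relComp (relPow R n) R

/-- Operated congruence. -/
def IsOpCong {X : Type} (T : Set (M X × M X)) : Prop :=
  (∀ a, (a, a) ∈ T) ∧ (∀ a b, (a, b) ∈ T → (b, a) ∈ T) ∧
  (∀ a b c, (a, b) ∈ T → (b, c) ∈ T → (a, c) ∈ T) ∧ Closed T

/-- The operated congruence `⟨R⟩` generated by `R`. -/
def ocong {X : Type} (R : Set (M X × M X)) : Set (M X × M X) :=
  ⋂₀ {T | IsOpCong T ∧ R ⊆ T}

/-- Equivalence relation (as a set of pairs). -/
def IsEqv {X : Type} (T : Set (M X × M X)) : Prop :=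
  (∀ a, (a, a) ∈ T) ∧ (∀ a b, (a, b) ∈ T → (b, a) ∈ T) ∧
  (∀ a b c, (a, b) ∈ T → (b, c) ∈ T → (a, c) ∈ T)

/-- The equivalence `T^e` generated by `T`. -/
def eqgen {X : Type} (T : Set (M X × M X)) : Set (M X × M X) :=
  ⋂₀ {E | IsEqv E ∧ T ⊆ E}

/-- A monomial order: a well-founded linear order compatible with the operations. -/
def IsMonomialOrder {X : Type} (lt : M X → M X → Prop) : Prop :=
  WellFounded lt ∧
  (∀ a b, a = b ∨ lt a b ∨ lt b a) ∧
  (∀ a b c, lt a b → lt b c → lt a c) ∧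
  (∀ u v w, lt u v → lt (u ++ w) (v ++ w) ∧ lt (w ++ u) (w ++ v) ∧ lt (L u) (L v))

/-- The term-rewriting system `Π_S`. -/
def PiS {X : Type} (lt : M X → M X → Prop) (S : Set (M X × M X)) : Set (M X × M X) :=
  {p | ∃ q t v, IsStar q ∧ ((t, v) ∈ S ∨ (v, t) ∈ S) ∧ lt v t ∧ p = (sub q t, sub q v)}

/-- One-step rewriting. -/
def Rew {X : Type} (lt : M X → M X → Prop) (S : Set (M X × M X)) (a b : M X) : Prop :=
  (a, b) ∈ PiS lt S

/-- Joinability under `Π_S`. -/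
def Joinable {X : Type} (lt : M X → M X → Prop) (S : Set (M X × M X)) (f g : M X) : Prop :=
  ∃ h, Relation.ReflTransGen (Rew lt S) f h ∧ Relation.ReflTransGen (Rew lt S) g h

/-- Termination of `Π_S`. -/
def Terminating {X : Type} (lt : M X → M X → Prop) (S : Set (M X × M X)) : Prop :=
  ¬ ∃ f : ℕ → M X, ∀ n, Rew lt S (f n) (f (n + 1))

/-- Confluence of `Π_S`. -/
def Confluent {X : Type} (lt : M X → M X → Prop) (S : Set (M X × M X)) : Prop :=
  ∀ f g h, Relation.ReflTransGen (Rew lt S) f g → Relation.ReflTransGen (Rew lt S) f h →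
    Joinable lt S g h

/-- Irreducible elements: `𝔐(X) \ Dom(Π_S)`. -/
def Irr {X : Type} (lt : M X → M X → Prop) (S : Set (M X × M X)) : Set (M X) :=
  {f | ∀ g, ¬ Rew lt S f g}

/-- Predecessors of `a`. -/
def Pre {X : Type} (lt : M X → M X → Prop) (S : Set (M X × M X)) (a : M X) : Set (M X) :=
  {f | Relation.ReflTransGen (Rew lt S) f a}

/-- `W` is a section of `⟨S⟩`: every congruence class meets `W` in exactly one element. -/
def IsSection {X : Type} (S : Set (M X × M X)) (W : Set (M X)) : Prop :=
  ∀ a : M X, ∃! w, w ∈ W ∧ (a, w) ∈ ocong S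

/-- Separated placements `(u₁,q₁)`, `(u₂,q₂)` in `w`. -/
def Separated {X : Type} (u₁ : M X) (q₁ : M (Option X)) (u₂ : M X) (q₂ : M (Option X))
    (w : M X) : Prop :=
  ∃ p, IsStar2 p ∧ q₁ = sub2R p u₂ ∧ q₂ = sub2L p u₁ ∧ w = sub2 p u₁ u₂

/-- Nested placements: one context is a subcontext of the other. -/
def Nested {X : Type} (q₁ q₂ : M (Option X)) : Prop :=
  ∃ q, IsStar q ∧ (q₂ = subS q₁ q ∨ q₁ = subS q₂ q)

/-- Intersecting placements `(u₁,q₁)`, `(u₂,q₂)` in `w`. -/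
def Intersecting {X : Type} (w u₁ : M X) (q₁ : M (Option X)) (u₂ : M X)
    (q₂ : M (Option X)) : Prop :=
  ∃ q a b c, IsStar q ∧ a ≠ ([] : M X) ∧ b ≠ ([] : M X) ∧ c ≠ ([] : M X) ∧
    w = sub q (a ++ b ++ c) ∧
    ((q₁ = subS q (starW ++ emb c) ∧ q₂ = subS q (emb a ++ starW)) ∨
     (q₁ = subS q (emb a ++ starW) ∧ q₂ = subS q (starW ++ emb c)))

/-- Defining relations of the free `∗`-monoid. -/
def SStar (X : Type) : Set (M X × M X) :=
  {p | (∃ w : M X, p = (L (L w), w)) ∨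
       (∃ u v : M X, u ≠ [] ∧ v ≠ [] ∧ p = (L (u ++ v), L v ++ L u)) ∨
       p = (L [], [])}

/-- Defining relations of the free group. -/
def SGrp (X : Type) : Set (M X × M X) :=
  {p | (∃ w : M X, p = (L (L w), w)) ∨
       (∃ u v : M X, u ≠ [] ∧ v ≠ [] ∧ p = (L (u ++ v), L v ++ L u)) ∨
       (∃ w : M X, p = (L w ++ w, [])) ∨
       (∃ w : M X, p = (w ++ L w, []))}


/-! ### Auxiliary development -/

section Aux

variable {X : Type}

/-- Normal form of a bracket content (assuming content already normal), letter version. -/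
def nfBrL : Letter X → M X
  | .of x => [.br [.of x]]
  | .br w => w

/-- Normal form of `⌊u⌋` for `u` already normal. -/
def nfBr : M X → M X
  | [] => []
  | a :: rest => nfBr rest ++ nfBrL a

mutual
  /-- Normal form, letter version. -/
  def nfL : Letter X → M X
    | .of x => [.of x]
    | .br w => nfBr (nfW w)
  /-- Normal form, word version. -/
  def nfW : M X → M X
    | [] => []
    | a :: rest => nfL a ++ nfW rest
end

/-- Normality of a letter. -/
def NormL : Letter X → Prop
  | .of _ => True
  | .br w => ∃ x, w = [Letter.of x]

/-- Normality of a word. -/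
def Norm (u : M X) : Prop := ∀ a ∈ u, NormL a

theorem nfW_append (u v : M X) : nfW (u ++ v) = nfW u ++ nfW v := by
  induction u with
  | nil => simp [nfW]
  | cons a rest ih => simp [nfW, ih]

theorem nfBr_append (u v : M X) : nfBr (u ++ v) = nfBr v ++ nfBr u := by
  induction u with
  | nil => simp [nfBr]
  | cons a rest ih => simp [nfBr, ih]

theorem norm_nfBr {u : M X} (h : Norm u) : Norm (nfBr u) := by
  induction u with
  | nil => simp [nfBr, Norm]
  | cons a rest ih =>
    intro b hb
    rw [nfBr] at hb
    rcases List.mem_append.1 hb with hb | hb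
    · exact ih (fun c hc => h c (List.mem_cons_of_mem _ hc)) b hb
    · have ha : NormL a := h a (List.mem_cons_self)
      cases a with
      | of x => simp [nfBrL] at hb; subst hb; exact ⟨x, rfl⟩
      | br w =>
        obtain ⟨x, rfl⟩ := ha
        simp [nfBrL] at hb; subst hb; trivial

mutual
  theorem norm_nfL : ∀ a : Letter X, Norm (nfL a)
    | .of x => by intro b hb; simp [nfL] at hb; subst hb; trivial
    | .br w => by
      rw [nfL]
      exact norm_nfBr (norm_nfW w)
  theorem norm_nfW : ∀ u : M X, Norm (nfW u)
    | [] => by simp [nfW, Norm]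
    | a :: rest => by
      rw [nfW]
      intro b hb
      rcases List.mem_append.1 hb with hb | hb
      · exact norm_nfL a b hb
      · exact norm_nfW rest b hb
end

theorem nfBr_nfBr {u : M X} (h : Norm u) : nfBr (nfBr u) = u := by
  induction u with
  | nil => simp [nfBr]
  | cons a rest ih =>
    have ha : NormL a := h a (List.mem_cons_self)
    have hrest := ih (fun c hc => h c (List.mem_cons_of_mem _ hc))
    rw [nfBr, nfBr_append, hrest]
    cases a with
    | of x => simp [nfBrL, nfBr]
    | br w => obtain ⟨x, rfl⟩ := ha; simp [nfBrL, nfBr]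

theorem nfW_norm_id {u : M X} (h : Norm u) : nfW u = u := by
  induction u with
  | nil => rfl
  | cons a rest ih =>
    have ha : NormL a := h a (List.mem_cons_self)
    rw [nfW, ih (fun c hc => h c (List.mem_cons_of_mem _ hc))]
    cases a with
    | of x => simp [nfL]
    | br w =>
      obtain ⟨x, rfl⟩ := ha
      simp [nfL, nfW, nfBr, nfBrL]

/-- The substitution function used in `sub`. -/
def eF (u : M X) : Option X → M X := fun o => Option.elim o u (fun x => [Letter.of x])

theorem sub_def (q : M (Option X)) (u : M X) : sub q u = bindW q (eF u) := rfl

theorem bindW_append {Y Z : Type} (u v : M Y) (f : Y → M Z) :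
    bindW (u ++ v) f = bindW u f ++ bindW v f := by
  induction u with
  | nil => simp [bindW]
  | cons a rest ih => simp [bindW, ih]

theorem cntW_append {Y : Type} (p : Y → Bool) (u v : M Y) :
    cntW p (u ++ v) = cntW p u + cntW p v := by
  induction u with
  | nil => simp [cntW]
  | cons a rest ih => simp [cntW, ih]; omega

mutual
  theorem sub_emb_letter (u : M X) : ∀ a : Letter X,
      bindW (bindL a (fun x => [Letter.of (some x)])) (eF u) = [a]
    | .of x => by simp [bindL, bindW, eF]
    | .br w => by
      rw [bindL]
      simp only [bindW, bindL, eF]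
      rw [show bindW w (fun x => [Letter.of (some x)]) = emb w from rfl]
      rw [sub_emb u w]
      simp
  theorem sub_emb (u : M X) : ∀ c : M X, bindW (emb c) (eF u) = c
    | [] => by simp [emb, bindW]
    | a :: rest => by
      rw [show emb (a :: rest)
            = bindL a (fun x => [Letter.of (some x)]) ++ emb rest from rfl]
      rw [bindW_append, sub_emb_letter u a, sub_emb u rest]
      rfl
end

mutual
  theorem cnt_emb_letter : ∀ a : Letter X,
      cntW (fun o : Option X => o.isNone) (bindL a (fun x => [Letter.of (some x)])) = 0
    | .of x => by simp [bindL, cntW, cntL]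
    | .br w => by
      rw [bindL]
      simp only [cntW, cntL]
      exact Nat.add_zero _ ▸ cnt_emb w
  theorem cnt_emb : ∀ c : M X, cntW (fun o : Option X => o.isNone) (emb c) = 0
    | [] => by simp [emb, bindW, cntW]
    | a :: rest => by
      rw [show emb (a :: rest)
            = bindL a (fun x => [Letter.of (some x)]) ++ emb rest from rfl]
      rw [cntW_append, cnt_emb_letter a, cnt_emb rest]
end

mutual
  theorem bindL_cnt0 {Y Z : Type} {p : Y → Bool} {f g : Y → M Z}
      (hfg : ∀ y, p y = false → f y = g y) :
      ∀ a : Letter Y, cntL p a = 0 → bindL a f = bindL a g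
    | .of y, h => by
      rw [cntL] at h
      rw [bindL, bindL, hfg y (by by_cases hy : p y <;> simp [hy] at h ⊢)]
    | .br w, h => by
      rw [cntL] at h
      rw [bindL, bindL, bindW_cnt0 hfg w h]
  theorem bindW_cnt0 {Y Z : Type} {p : Y → Bool} {f g : Y → M Z}
      (hfg : ∀ y, p y = false → f y = g y) :
      ∀ q : M Y, cntW p q = 0 → bindW q f = bindW q g
    | [], _ => rfl
    | a :: rest, h => by
      rw [cntW] at h
      rw [bindW, bindW, bindL_cnt0 hfg a (by omega), bindW_cnt0 hfg rest (by omega)]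
end

theorem sub_cnt0 {q : M (Option X)} (h : cntW (fun o => o.isNone) q = 0) (u v : M X) :
    sub q u = sub q v := by
  rw [sub_def, sub_def]
  exact bindW_cnt0 (fun y hy => by cases y with
    | none => simp at hy
    | some x => rfl) q h

mutual
  theorem nf_bindL {Y : Type} {f g : Y → M X} (hfg : ∀ y, nfW (f y) = nfW (g y)) :
      ∀ a : Letter Y, nfW (bindL a f) = nfW (bindL a g)
    | .of y => hfg y
    | .br w => by
      rw [bindL, bindL]
      show nfL (.br (bindW w f)) ++ nfW [] = nfL (.br (bindW w g)) ++ nfW []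
      rw [nfL, nfL, nf_bindW hfg w]
  theorem nf_bindW {Y : Type} {f g : Y → M X} (hfg : ∀ y, nfW (f y) = nfW (g y)) :
      ∀ q : M Y, nfW (bindW q f) = nfW (bindW q g)
    | [] => rfl
    | a :: rest => by
      rw [bindW, bindW, nfW_append, nfW_append, nf_bindL hfg a, nf_bindW hfg rest]
end

theorem nfW_L (u : M X) : nfW (L u) = nfBr (nfW u) := by
  show nfL (.br u) ++ nfW [] = _
  rw [nfL, nfW, List.append_nil]

theorem nf_sstar {t v : M X} (h : (t, v) ∈ SStar X) : nfW t = nfW v := by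
  rcases h with ⟨w, hw⟩ | ⟨u, v', _, _, hw⟩ | hw
  · simp only [Prod.mk.injEq] at hw; obtain ⟨h1, h2⟩ := hw; subst h1; subst h2
    rw [nfW_L, nfW_L, nfBr_nfBr (norm_nfW _)]
  · simp only [Prod.mk.injEq] at hw; obtain ⟨h1, h2⟩ := hw; subst h1; subst h2
    rw [nfW_L, nfW_append, nfW_append, nfBr_append, nfW_L, nfW_L]
  · simp only [Prod.mk.injEq] at hw; obtain ⟨h1, h2⟩ := hw; subst h1; subst h2
    rw [nfW_L]; rfl

theorem nf_sub {t v : M X} (h : nfW t = nfW v) (q : M (Option X)) :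
    nfW (sub q t) = nfW (sub q v) := by
  rw [sub_def, sub_def]
  exact nf_bindW (fun y => by cases y with
    | none => exact h
    | some x => rfl) q

section Mono

variable {lt : M X → M X → Prop} (hlt : IsMonomialOrder lt)

theorem bindL_cnt0' {a : Letter (Option X)} (h : cntL (fun o => o.isNone) a = 0)
    (u v : M X) : bindL a (eF u) = bindL a (eF v) := by
  exact bindL_cnt0 (fun y hy => by cases y with
    | none => simp at hy
    | some x => rfl) a h

mutual
  theorem sub_mono_letter {u v : M X} (hlt : IsMonomialOrder lt) (huv : lt u v) :
      ∀ a : Letter (Option X), cntL (fun o => o.isNone) a = 1 →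
        lt (bindL a (eF u)) (bindL a (eF v))
    | .of o, h => by
      cases o with
      | none => simpa [bindL, eF] using huv
      | some x => simp [cntL] at h
    | .br w, h => by
      rw [cntL] at h
      rw [bindL, bindL]
      exact (hlt.2.2.2 _ _ [] (sub_mono hlt huv w h)).2.2
  theorem sub_mono {u v : M X} (hlt : IsMonomialOrder lt) (huv : lt u v) :
      ∀ q : M (Option X), cntW (fun o => o.isNone) q = 1 → lt (sub q u) (sub q v)
    | [], h => by simp [cntW] at h
    | a :: rest, h => by
      rw [cntW] at h
      rw [sub_def, sub_def, bindW, bindW]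
      rcases Nat.eq_zero_or_pos (cntL (fun o : Option X => o.isNone) a) with h0 | h1
      · rw [bindL_cnt0' h0 u v]
        have := sub_mono hlt huv rest (by omega)
        rw [sub_def, sub_def] at this
        exact (hlt.2.2.2 _ _ _ this).2.1
      · have ha : cntL (fun o : Option X => o.isNone) a = 1 := by omega
        have hr : cntW (fun o : Option X => o.isNone) rest = 0 := by omega
        have : bindW rest (eF u) = bindW rest (eF v) := by
          have := sub_cnt0 (q := rest) hr u v
          rwa [sub_def, sub_def] at this
        rw [this]
        exact (hlt.2.2.2 _ _ _ (sub_mono_letter hlt huv a ha)).1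
end

theorem lt_irrefl (hlt : IsMonomialOrder lt) (a : M X) : ¬ lt a a := by
  have wf := hlt.1
  exact fun h => (wf.induction (C := fun x => ¬ lt x x) a
    (fun x ih hx => ih x hx hx)) h

theorem lt_asymm (hlt : IsMonomialOrder lt) {a b : M X} (h1 : lt a b) (h2 : lt b a) : False :=
  lt_irrefl hlt a (hlt.2.2.1 a b a h1 h2)

end Mono

mutual
  /-- `l` occurs in the letter `a` (at any depth). -/
  def occL (l : Letter X) : Letter X → Prop
    | .of x => l = .of x
    | .br w => l = .br w ∨ occW l w
  /-- `l` occurs in the word `u` (at any depth). -/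
  def occW (l : Letter X) : M X → Prop
    | [] => False
    | a :: rest => occL l a ∨ occW l rest
end

theorem occL_refl (l : Letter X) : occL l l := by
  cases l with
  | of x => rw [occL]
  | br w => rw [occL]; exact Or.inl rfl

theorem occW_append_left {l : Letter X} {u : M X} (h : occW l u) (v : M X) :
    occW l (u ++ v) := by
  induction u with
  | nil => exact absurd h (by rw [occW]; exact id)
  | cons a rest ih =>
    rw [occW] at h
    rw [List.cons_append, occW]
    exact h.imp id ih

theorem occW_append_right {l : Letter X} (u : M X) {v : M X} (h : occW l v) :
    occW l (u ++ v) := by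
  induction u with
  | nil => exact h
  | cons a rest ih => rw [List.cons_append, occW]; exact Or.inr ih

mutual
  theorem occ_sub_letter (c : M X) :
      ∀ a : Letter (Option X), cntL (fun o => o.isNone) a ≠ 0 →
        occW (Letter.br c) (bindL a (eF [Letter.br c]))
    | .of o, h => by
      cases o with
      | none =>
        rw [bindL]
        show occW _ [Letter.br c]
        rw [occW]
        exact Or.inl (occL_refl _)
      | some x => rw [cntL] at h; simp at h
    | .br w, h => by
      rw [cntL] at h
      rw [bindL, occW, occL]
      exact Or.inl (Or.inr (occ_sub c w h))
  theorem occ_sub (c : M X) :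
      ∀ q : M (Option X), cntW (fun o => o.isNone) q ≠ 0 →
        occW (Letter.br c) (bindW q (eF [Letter.br c]))
    | [], h => by rw [cntW] at h; simp at h
    | a :: rest, h => by
      rw [cntW] at h
      rw [bindW]
      rcases Nat.eq_zero_or_pos (cntL (fun o : Option X => o.isNone) a) with h0 | h1
      · exact occW_append_right _ (occ_sub c rest (by omega))
      · exact occW_append_left (occ_sub_letter c a (by omega)) _
end

theorem normL_occ {a l : Letter X} (ha : NormL a) (h : occL l a) : NormL l := by
  cases a with
  | of x => rw [occL] at h; subst h; trivial
  | br w =>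
    obtain ⟨x, rfl⟩ := ha
    rw [occL] at h
    rcases h with rfl | h
    · exact ⟨x, rfl⟩
    · rw [occW] at h
      rcases h with h | h
      · rw [occL] at h; subst h; trivial
      · exact absurd h (by rw [occW]; exact id)

theorem norm_occ {u : M X} {l : Letter X} (hu : Norm u) (h : occW l u) : NormL l := by
  induction u with
  | nil => exact absurd h (by rw [occW]; exact id)
  | cons a rest ih =>
    rw [occW] at h
    rcases h with h | h
    · exact normL_occ (hu a (List.mem_cons_self)) h
    · exact ih (fun c hc => hu c (List.mem_cons_of_mem _ hc)) h

section Rewriting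

variable {lt : M X → M X → Prop} {S : Set (M X × M X)}

theorem isStar_star : IsStar (starW (X := X)) := by
  simp [IsStar, starW, cntW, cntL]

theorem sub_star (t : M X) : sub starW t = t := by
  simp [starW, sub, bindW, bindL, eF]

theorem rew_base (hor : ∀ p ∈ SStar X, lt p.2 p.1) {t v : M X}
    (h : (t, v) ∈ SStar X) : Rew lt (SStar X) t v := by
  refine ⟨starW, t, v, isStar_star, Or.inl h, hor (t, v) h, ?_⟩
  rw [sub_star, sub_star]

theorem rew_mul_left (c : M X) {a b : M X} (h : Rew lt S a b) :
    Rew lt S (c ++ a) (c ++ b) := by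
  obtain ⟨q, t, v, hq, hmem, hv, heq⟩ := h
  simp only [Prod.mk.injEq] at heq
  obtain ⟨h1, h2⟩ := heq
  refine ⟨emb c ++ q, t, v, ?_, hmem, hv, ?_⟩
  · show cntW _ _ = 1
    rw [cntW_append, cnt_emb]
    simpa [IsStar] using hq
  · simp only [Prod.mk.injEq]
    constructor
    · rw [sub_def, bindW_append, sub_emb, ← sub_def, ← h1]
    · rw [sub_def, bindW_append, sub_emb, ← sub_def, ← h2]

theorem rew_mul_right (c : M X) {a b : M X} (h : Rew lt S a b) :
    Rew lt S (a ++ c) (b ++ c) := by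
  obtain ⟨q, t, v, hq, hmem, hv, heq⟩ := h
  simp only [Prod.mk.injEq] at heq
  obtain ⟨h1, h2⟩ := heq
  refine ⟨q ++ emb c, t, v, ?_, hmem, hv, ?_⟩
  · show cntW _ _ = 1
    rw [cntW_append, cnt_emb]
    simpa [IsStar] using hq
  · simp only [Prod.mk.injEq]
    constructor
    · rw [sub_def, bindW_append, sub_emb, ← sub_def, ← h1]
    · rw [sub_def, bindW_append, sub_emb, ← sub_def, ← h2]

theorem rew_op {a b : M X} (h : Rew lt S a b) : Rew lt S (L a) (L b) := by
  obtain ⟨q, t, v, hq, hmem, hv, heq⟩ := h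
  simp only [Prod.mk.injEq] at heq
  obtain ⟨h1, h2⟩ := heq
  refine ⟨[Letter.br q], t, v, ?_, hmem, hv, ?_⟩
  · show cntW _ _ = 1
    simp only [cntW, cntL]
    simpa [IsStar] using hq
  · simp only [Prod.mk.injEq]
    constructor
    · rw [h1]; rfl
    · rw [h2]; rfl

theorem rtg_mul_left (c : M X) {a b : M X}
    (h : Relation.ReflTransGen (Rew lt S) a b) :
    Relation.ReflTransGen (Rew lt S) (c ++ a) (c ++ b) :=
  Relation.ReflTransGen.lift (c ++ ·) (fun _ _ hr => rew_mul_left c hr) _ _ h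

theorem rtg_mul_right (c : M X) {a b : M X}
    (h : Relation.ReflTransGen (Rew lt S) a b) :
    Relation.ReflTransGen (Rew lt S) (a ++ c) (b ++ c) :=
  Relation.ReflTransGen.lift (· ++ c) (fun _ _ hr => rew_mul_right c hr) _ _ h

theorem rtg_op {a b : M X} (h : Relation.ReflTransGen (Rew lt S) a b) :
    Relation.ReflTransGen (Rew lt S) (L a) (L b) :=
  Relation.ReflTransGen.lift L (fun _ _ hr => rew_op hr) _ _ h

variable (hor : ∀ p ∈ SStar X, lt p.2 p.1)
include hor

theorem reachBrL (a : Letter X) :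
    Relation.ReflTransGen (Rew lt (SStar X)) (L [a]) (nfBrL a) := by
  cases a with
  | of x => exact Relation.ReflTransGen.refl
  | br w =>
    exact Relation.ReflTransGen.single (rew_base hor (Or.inl ⟨w, rfl⟩))

theorem reachBr : ∀ {v : M X}, Norm v →
    Relation.ReflTransGen (Rew lt (SStar X)) (L v) (nfBr v) := by
  intro v
  induction v with
  | nil =>
    intro _
    exact Relation.ReflTransGen.single (rew_base hor (Or.inr (Or.inr rfl)))
  | cons a rest ih =>
    intro hn
    cases rest with
    | nil =>
      show Relation.ReflTransGen _ _ (nfBr [] ++ nfBrL a)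
      rw [nfBr, List.nil_append]
      exact reachBrL hor a
    | cons b rs =>
      have step : Rew lt (SStar X) (L (a :: b :: rs)) (L (b :: rs) ++ L [a]) :=
        rew_base hor (Or.inr (Or.inl ⟨[a], b :: rs, by simp, by simp, rfl⟩))
      refine Relation.ReflTransGen.head step ?_
      have h1 := rtg_mul_right (L [a])
        (ih (fun c hc => hn c (List.mem_cons_of_mem _ hc)))
      have h2 := rtg_mul_left (nfBr (b :: rs)) (reachBrL hor a)
      exact h1.trans h2

mutual
  theorem reachL : ∀ a : Letter X,
      Relation.ReflTransGen (Rew lt (SStar X)) [a] (nfL a)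
    | .of x => by rw [nfL]
    | .br w => by
      rw [nfL]
      exact (rtg_op (reachW w)).trans (reachBr hor (norm_nfW w))
  theorem reachW : ∀ u : M X,
      Relation.ReflTransGen (Rew lt (SStar X)) u (nfW u)
    | [] => by rw [nfW]
    | a :: rest => by
      rw [nfW]
      have h1 : Relation.ReflTransGen (Rew lt (SStar X)) ([a] ++ rest)
          (nfL a ++ rest) := rtg_mul_right rest (reachL a)
      exact h1.trans (rtg_mul_left (nfL a) (reachW rest))
end

end Rewriting

section NF

variable {lt : M X → M X → Prop}

theorem rew_nf (hlt : IsMonomialOrder lt) {a b : M X}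
    (h : Rew lt (SStar X) a b) : nfW a = nfW b := by
  obtain ⟨q, t, v, hq, hmem, hv, heq⟩ := h
  simp only [Prod.mk.injEq] at heq
  obtain ⟨h1, h2⟩ := heq
  subst h1; subst h2
  rcases hmem with hm | hm
  · exact nf_sub (nf_sstar hm) q
  · exact nf_sub (nf_sstar hm).symm q

theorem rtg_nf (hlt : IsMonomialOrder lt) {a b : M X}
    (h : Relation.ReflTransGen (Rew lt (SStar X)) a b) : nfW a = nfW b := by
  induction h with
  | refl => rfl
  | tail _ hstep ih => exact ih.trans (rew_nf hlt hstep)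

end NF

section Ocong

theorem isOpCong_ocong (S : Set (M X × M X)) : IsOpCong (ocong S) := by
  refine ⟨fun a => Set.mem_sInter.2 fun T hT => hT.1.1 a,
    fun a b h => Set.mem_sInter.2 fun T hT => hT.1.2.1 a b (Set.mem_sInter.1 h T hT),
    fun a b c h1 h2 => Set.mem_sInter.2 fun T hT =>
      hT.1.2.2.1 a b c (Set.mem_sInter.1 h1 T hT) (Set.mem_sInter.1 h2 T hT),
    fun a b h c => ⟨?_, ?_, ?_⟩⟩
  · exact Set.mem_sInter.2 fun T hT => (hT.1.2.2.2 a b (Set.mem_sInter.1 h T hT) c).1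
  · exact Set.mem_sInter.2 fun T hT => (hT.1.2.2.2 a b (Set.mem_sInter.1 h T hT) c).2.1
  · exact Set.mem_sInter.2 fun T hT => (hT.1.2.2.2 a b (Set.mem_sInter.1 h T hT) c).2.2

theorem subset_ocong (S : Set (M X × M X)) : S ⊆ ocong S :=
  fun p hp => Set.mem_sInter.2 fun _ hT => hT.2 hp

mutual
  theorem bindL_cong {Y : Type} {T : Set (M X × M X)} (hT : IsOpCong T)
      {f g : Y → M X} (hfg : ∀ y, (f y, g y) ∈ T) :
      ∀ a : Letter Y, (bindL a f, bindL a g) ∈ T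
    | .of y => hfg y
    | .br w => by
      rw [bindL, bindL]
      exact (hT.2.2.2 _ _ (bindW_cong hT hfg w) []).2.2
  theorem bindW_cong {Y : Type} {T : Set (M X × M X)} (hT : IsOpCong T)
      {f g : Y → M X} (hfg : ∀ y, (f y, g y) ∈ T) :
      ∀ q : M Y, (bindW q f, bindW q g) ∈ T
    | [] => hT.1 []
    | a :: rest => by
      rw [bindW, bindW]
      refine hT.2.2.1 _ (bindL a f ++ bindW rest g) _ ?_ ?_
      · exact (hT.2.2.2 _ _ (bindW_cong hT hfg rest) (bindL a f)).2.1
      · exact (hT.2.2.2 _ _ (bindL_cong hT hfg a) (bindW rest g)).1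
end

theorem rew_mem_ocong {lt : M X → M X → Prop} {S : Set (M X × M X)} {a b : M X}
    (h : Rew lt S a b) : (a, b) ∈ ocong S := by
  obtain ⟨q, t, v, _, hmem, _, heq⟩ := h
  simp only [Prod.mk.injEq] at heq
  obtain ⟨h1, h2⟩ := heq
  subst h1; subst h2
  have hcong := isOpCong_ocong S
  have key : ∀ {t v : M X}, (t, v) ∈ ocong S →
      (sub q t, sub q v) ∈ ocong S := by
    intro t v htv
    rw [sub_def, sub_def]
    exact bindW_cong hcong (fun y => by
      cases y with
      | none => exact htv
      | some x => exact hcong.1 _) q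
  rcases hmem with hm | hm
  · exact key (subset_ocong S hm)
  · exact key (hcong.2.1 _ _ (subset_ocong S hm))

theorem rtg_mem_ocong {lt : M X → M X → Prop} {S : Set (M X × M X)} {a b : M X}
    (h : Relation.ReflTransGen (Rew lt S) a b) : (a, b) ∈ ocong S := by
  induction h with
  | refl => exact (isOpCong_ocong S).1 _
  | tail _ hstep ih => exact (isOpCong_ocong S).2.2.1 _ _ _ ih (rew_mem_ocong hstep)

theorem ocong_nf {a b : M X} (h : (a, b) ∈ ocong (SStar X)) : nfW a = nfW b := by
  have hmem : {p : M X × M X | nfW p.1 = nfW p.2} ∈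
      {T | IsOpCong T ∧ SStar X ⊆ T} := by
    refine ⟨⟨fun a => rfl, fun a b h => h.symm, fun a b c h1 h2 => h1.trans h2,
      fun a b h c => ⟨?_, ?_, ?_⟩⟩, fun p hp => nf_sstar hp⟩
    · show nfW (a ++ c) = nfW (b ++ c)
      rw [nfW_append, nfW_append, h]
    · show nfW (c ++ a) = nfW (c ++ b)
      rw [nfW_append, nfW_append, h]
    · show nfW (L a) = nfW (L b)
      rw [nfW_L, nfW_L, h]
  exact Set.sInter_subset_of_mem hmem h

end Ocong

section IrrNorm

variable {lt : M X → M X → Prop} (hlt : IsMonomialOrder lt)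
  (hor : ∀ p ∈ SStar X, lt p.2 p.1)
include hlt hor

theorem norm_irr {u : M X} (hu : Norm u) : u ∈ Irr lt (SStar X) := by
  intro g hg
  obtain ⟨q, t, v, hq, hmem, hv, heq⟩ := hg
  have ht : (t, v) ∈ SStar X := by
    rcases hmem with hm | hm
    · exact hm
    · exact absurd (hor _ hm) (fun h => lt_asymm hlt hv h)
  simp only [Prod.mk.injEq] at heq
  obtain ⟨h1, _⟩ := heq
  have hq' : cntW (fun o : Option X => o.isNone) q ≠ 0 := by
    rw [hq]; exact one_ne_zero
  have key : ∀ c : M X, t = [Letter.br c] → ∃ x, c = [Letter.of x] := by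
    intro c htc
    have hocc : occW (Letter.br c) u := by
      rw [h1, htc, sub_def]
      exact occ_sub c q hq'
    exact norm_occ hu hocc
  rcases ht with ⟨w, hw⟩ | ⟨u', v', hu', hv', hw⟩ | hw
  · simp only [Prod.mk.injEq] at hw
    obtain ⟨x, hx⟩ := key (L w) hw.1
    exact absurd hx (by simp [L])
  · simp only [Prod.mk.injEq] at hw
    obtain ⟨x, hx⟩ := key (u' ++ v') hw.1
    have : u'.length + v'.length = 1 := by
      have := congrArg List.length hx
      simpa using this
    have h1' : u'.length ≠ 0 := fun h => hu' (List.length_eq_zero_iff.1 h)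
    have h2' : v'.length ≠ 0 := fun h => hv' (List.length_eq_zero_iff.1 h)
    omega
  · simp only [Prod.mk.injEq] at hw
    obtain ⟨x, hx⟩ := key [] hw.1
    simp at hx

theorem irr_norm {u : M X} (hu : u ∈ Irr lt (SStar X)) : Norm u := by
  by_contra hn
  have : ∃ a ∈ u, ¬ NormL a := by
    by_contra h
    push_neg at h
    exact hn h
  obtain ⟨a, ha, hna⟩ := this
  cases a with
  | of x => exact hna trivial
  | br w =>
    obtain ⟨u₁, u₂, rfl⟩ := List.append_of_mem ha
    -- find t v with (t, v) ∈ SStar X and t = [Letter.br w]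
    have main : ∀ t v : M X, (t, v) ∈ SStar X → t = [Letter.br w] → False := by
      intro t v hmem htw
      set q : M (Option X) := emb u₁ ++ Letter.of none :: emb u₂ with hqdef
      have hstar : IsStar q := by
        show cntW _ _ = 1
        rw [hqdef, cntW_append, cnt_emb, cntW, cnt_emb, cntL]
        rfl
      have hsub : sub q t = u₁ ++ Letter.br w :: u₂ := by
        rw [hqdef, sub_def, bindW_append, sub_emb]
        rw [show bindW (Letter.of none :: emb u₂) (eF t)
              = t ++ bindW (emb u₂) (eF t) from rfl]
        rw [show bindW (emb u₂) (eF t) = u₂ from sub_emb t u₂, htw]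
        rfl
      exact hu (sub q v) ⟨q, t, v, hstar, Or.inl hmem, hor _ hmem, by
        rw [hsub]⟩
    cases w with
    | nil => exact main (L []) [] (Or.inr (Or.inr rfl)) rfl
    | cons l₁ rest =>
      cases rest with
      | nil =>
        cases l₁ with
        | of x => exact hna ⟨x, rfl⟩
        | br w' => exact main (L (L w')) w' (Or.inl ⟨w', rfl⟩) rfl
      | cons l₂ rs =>
        exact main (L ([l₁] ++ (l₂ :: rs))) (L (l₂ :: rs) ++ L [l₁])
          (Or.inr (Or.inl ⟨[l₁], l₂ :: rs, by simp, by simp, rfl⟩)) rfl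

end IrrNorm

end Aux

/-- `Π_S` for the `∗`-monoid relations is convergent and `Irr(S)` is a
section of the free `∗`-monoid `𝔐(X)/⟨S⟩`. -/
theorem sstar_convergent_section (X : Type) (lt : M X → M X → Prop)
    (hlt : IsMonomialOrder lt) (hor : ∀ p ∈ SStar X, lt p.2 p.1) :
    (Terminating lt (SStar X) ∧ Confluent lt (SStar X)) ∧
    IsSection (SStar X) (Irr lt (SStar X)) := by
  refine ⟨⟨?_, ?_⟩, ?_⟩
  · -- Terminating
    rintro ⟨f, hf⟩
    have key : ∀ n, lt (f (n + 1)) (f n) := by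
      intro n
      obtain ⟨q, t, v, hq, hmem, hv, heq⟩ := hf n
      simp only [Prod.mk.injEq] at heq
      obtain ⟨h1, h2⟩ := heq
      rw [h1, h2]
      exact sub_mono hlt hv q hq
    have : ∀ a : M X, ∀ n, f n ≠ a := by
      refine fun a => hlt.1.induction (C := fun x => ∀ n, f n ≠ x) a ?_
      intro x ih n hn
      exact ih (f (n + 1)) (by rw [← hn]; exact key n) (n + 1) rfl
    exact this (f 0) 0 rfl
  · -- Confluent
    intro f g h hg hh
    refine ⟨nfW f, ?_, ?_⟩
    · have := reachW hor g
      rwa [← rtg_nf hlt hg] at this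
    · have := reachW hor h
      rwa [← rtg_nf hlt hh] at this
  · -- Section
    intro a
    refine ⟨nfW a, ⟨norm_irr hlt hor (norm_nfW a), rtg_mem_ocong (reachW hor a)⟩, ?_⟩
    rintro w' ⟨hw', hc'⟩
    have h1 := ocong_nf hc'
    have h2 := nfW_norm_id (irr_norm hlt hor hw')
    rw [← h2, ← h1]

end OpMon
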